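/- In a regular multi-pointed category with kernels, given a square of type (1), let ⟨g, c⟩ = m·p be the (regular epimorphism, monomorphism) factorisation of the comparison morphism C → D×_B A to the pullback of d and f, with m: M ↣ D×_B A; put a = x·m and b = y·m where x, y are the pullback projections, and let n_a: N_a → M and n_x: N_x → D×_B A be N-kernels of a and of x. Then the square is a star-regular pushout if and only if the induced morphism N_a → N_x (the one satisfying n_x·(N_a → N_x) = m·n_a) is an isomorphism. -/

import Mathlib

open CategoryTheory CategoryTheory.Limits

universe v u

namespace Paper

variable {𝒞 : Type u} [Category.{v} 𝒞]

/-- `f` is a regular epimorphism: it is a coequaliser of some pair of morphisms. -/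
def IsRegEpi {X Y : 𝒞} (f : X ⟶ Y) : Prop :=
  ∃ (Z : 𝒞) (a b : Z ⟶ X), a ≫ f = b ≫ f ∧
    ∀ {T : 𝒞} (h : X ⟶ T), a ≫ h = b ≫ h → ∃! u : Y ⟶ T, f ≫ u = h

/-- Regular epimorphisms are pullback-stable. -/
def RegEpisStable (𝒞 : Type u) [Category.{v} 𝒞] : Prop :=
  ∀ {P X Y Z : 𝒞} (p₁ : P ⟶ X) (p₂ : P ⟶ Y) (f : X ⟶ Z) (g : Y ⟶ Z),
    IsPullback p₁ p₂ f g → IsRegEpi g → IsRegEpi p₁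

/-- Every kernel pair admits a coequaliser. -/
def KernelPairsHaveCoequalisers (𝒞 : Type u) [Category.{v} 𝒞] : Prop :=
  ∀ {R X Y : 𝒞} (f : X ⟶ Y) (a b : R ⟶ X), IsKernelPair f a b →
    ∃ (Q : 𝒞) (q : X ⟶ Q), a ≫ q = b ≫ q ∧
      ∀ {T : 𝒞} (h : X ⟶ T), a ≫ h = b ≫ h → ∃! u : Q ⟶ T, q ≫ u = h

/-- A relation from `X` to `Y`: a jointly monomorphic span. -/
structure Rel (𝒞 : Type u) [Category.{v} 𝒞] (X Y : 𝒞) where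
  R : 𝒞
  p1 : R ⟶ X
  p2 : R ⟶ Y
  jm : ∀ {Z : 𝒞} (a b : Z ⟶ R), a ≫ p1 = b ≫ p1 → a ≫ p2 = b ≫ p2 → a = b

variable {X Y Z : 𝒞}

/-- `ρ` is a subrelation of `σ`. -/
def Rel.le (ρ σ : Rel 𝒞 X Y) : Prop :=
  ∃ j : ρ.R ⟶ σ.R, j ≫ σ.p1 = ρ.p1 ∧ j ≫ σ.p2 = ρ.p2

/-- `ρ` and `σ` are the same relation (isomorphic as subobjects of `X × Y`). -/
def Rel.equiv (ρ σ : Rel 𝒞 X Y) : Prop := ρ.le σ ∧ σ.le ρ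

/-- The opposite relation. -/
def Rel.op (ρ : Rel 𝒞 X Y) : Rel 𝒞 Y X :=
  ⟨ρ.R, ρ.p2, ρ.p1, fun a b h2 h1 => ρ.jm a b h1 h2⟩

/-- A morphism viewed as a relation. -/
def homRel (f : X ⟶ Y) : Rel 𝒞 X Y :=
  ⟨X, 𝟙 X, f, fun a b h _ => by simpa using h⟩

/-- The discrete (diagonal) relation on `X`. -/
def diagRel (X : 𝒞) : Rel 𝒞 X X := homRel (𝟙 X)

/-- The kernel pair `Eq(f)` of `f` as a relation on `X`. -/
noncomputable def kerPairRel [HasPullbacks 𝒞] (f : X ⟶ Y) : Rel 𝒞 X X :=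
  ⟨pullback f f, pullback.fst f f, pullback.snd f f,
    fun a b h1 h2 => pullback.hom_ext h1 h2⟩

/-- `τ` is the composite `σρ` (first `ρ` from `X` to `Y`, then `σ` from `Y` to `Z`),
i.e. the (regular epi, jointly mono) factorisation of the span induced on the
pullback of `ρ.p2` and `σ.p1`. -/
def IsRelComp [HasPullbacks 𝒞] (σ : Rel 𝒞 Y Z) (ρ : Rel 𝒞 X Y) (τ : Rel 𝒞 X Z) : Prop :=
  ∃ e : pullback ρ.p2 σ.p1 ⟶ τ.R, IsRegEpi e ∧
    e ≫ τ.p1 = pullback.fst ρ.p2 σ.p1 ≫ ρ.p1 ∧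
    e ≫ τ.p2 = pullback.snd ρ.p2 σ.p1 ≫ σ.p2

def Rel.IsReflexive (ρ : Rel 𝒞 X X) : Prop :=
  ∃ r : X ⟶ ρ.R, r ≫ ρ.p1 = 𝟙 X ∧ r ≫ ρ.p2 = 𝟙 X

def Rel.IsSymmetric (ρ : Rel 𝒞 X X) : Prop :=
  ∃ s : ρ.R ⟶ ρ.R, s ≫ ρ.p1 = ρ.p2 ∧ s ≫ ρ.p2 = ρ.p1

def Rel.IsTransitive [HasPullbacks 𝒞] (ρ : Rel 𝒞 X X) : Prop :=
  ∃ t : pullback ρ.p2 ρ.p1 ⟶ ρ.R,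
    t ≫ ρ.p1 = pullback.fst ρ.p2 ρ.p1 ≫ ρ.p1 ∧
    t ≫ ρ.p2 = pullback.snd ρ.p2 ρ.p1 ≫ ρ.p2

def Rel.IsEquivalence [HasPullbacks 𝒞] (ρ : Rel 𝒞 X X) : Prop :=
  ρ.IsReflexive ∧ ρ.IsSymmetric ∧ ρ.IsTransitive

/-- A finitely complete category is a Mal'tsev category when every reflexive
relation in it is an equivalence relation. -/
def IsMaltsev (𝒞 : Type u) [Category.{v} 𝒞] [HasPullbacks 𝒞] : Prop :=
  ∀ {X : 𝒞} (ρ : Rel 𝒞 X X), ρ.IsReflexive → ρ.IsEquivalence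

/-- A square of type (1): split epimorphisms `f` (with section `s`) and `g`
(with section `t`), regular epimorphisms `c` and `d`, with `f·c = d·g` and
`s·d = c·t`. -/
structure IsSquare1 {A B E D : 𝒞} (f : A ⟶ B) (s : B ⟶ A) (g : E ⟶ D) (t : D ⟶ E)
    (c : E ⟶ A) (d : D ⟶ B) : Prop where
  sec_f : s ≫ f = 𝟙 B
  sec_g : t ≫ g = 𝟙 D
  regepi_c : IsRegEpi c
  regepi_d : IsRegEpi d
  comm1 : c ≫ f = g ≫ d
  comm2 : d ≫ s = t ≫ c

/-- `N` is an ideal of morphisms. -/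
def IsIdeal (N : MorphismProperty 𝒞) : Prop :=
  ∀ {X Y Z : 𝒞} (f : X ⟶ Y) (g : Y ⟶ Z), N f ∨ N g → N (f ≫ g)

/-- `n` is an `N`-kernel of `f`. -/
def IsNKernel (N : MorphismProperty 𝒞) {X Y K : 𝒞} (f : X ⟶ Y) (n : K ⟶ X) : Prop :=
  N (n ≫ f) ∧ ∀ {Z : 𝒞} (m : Z ⟶ X), N (m ≫ f) → ∃! u : Z ⟶ K, u ≫ n = m

/-- Every morphism admits an `N`-kernel. -/
def HasNKernels (N : MorphismProperty 𝒞) : Prop :=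
  ∀ {X Y : 𝒞} (f : X ⟶ Y), ∃ (K : 𝒞) (n : K ⟶ X), IsNKernel N f n

/-- `τ` is the largest star subrelation `ρ*` of the relation `ρ`. -/
def IsLargestStarSub (N : MorphismProperty 𝒞) (ρ τ : Rel 𝒞 X Y) : Prop :=
  τ.le ρ ∧ N τ.p1 ∧ ∀ σ : Rel 𝒞 X Y, σ.le ρ → N σ.p1 → σ.le τ

/-- `(s1, s2)` is the star-kernel of `f`: the universal star coequalised by `f`. -/
def IsStarKernel (N : MorphismProperty 𝒞) {S X Y : 𝒞} (f : X ⟶ Y) (s1 s2 : S ⟶ X) : Prop :=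
  N s1 ∧ s1 ≫ f = s2 ≫ f ∧
    ∀ {T : 𝒞} (t1 t2 : T ⟶ X), N t1 → t1 ≫ f = t2 ≫ f →
      ∃! u : T ⟶ S, u ≫ s1 = t1 ∧ u ≫ s2 = t2

/-- `(ν1, ν2)` is the star of the pullback relation of `(g, δ)`: the universal
pair with `ν1 ∈ N` and `δ·ν1 = g·ν2`. -/
def IsStarPullbackRel (N : MorphismProperty 𝒞) {W E D P : 𝒞} (δ : W ⟶ D) (g : E ⟶ D)
    (ν1 : P ⟶ W) (ν2 : P ⟶ E) : Prop :=
  N ν1 ∧ ν1 ≫ δ = ν2 ≫ g ∧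
    ∀ {T : 𝒞} (t1 : T ⟶ W) (t2 : T ⟶ E), N t1 → t1 ≫ δ = t2 ≫ g →
      ∃! u : T ⟶ P, u ≫ ν1 = t1 ∧ u ≫ ν2 = t2

/-- `f` is a coequaliser of `(s1, s2)`. -/
def IsCoeqOf {S X Y : 𝒞} (f : X ⟶ Y) (s1 s2 : S ⟶ X) : Prop :=
  s1 ≫ f = s2 ≫ f ∧ ∀ {T : 𝒞} (h : X ⟶ T), s1 ≫ h = s2 ≫ h → ∃! u : Y ⟶ T, f ≫ u = h

/-- Star-regularity: every regular epimorphism is a coequaliser of a star. -/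
def StarRegular (𝒞 : Type u) [Category.{v} 𝒞] (N : MorphismProperty 𝒞) : Prop :=
  ∀ {X Y : 𝒞} (f : X ⟶ Y), IsRegEpi f →
    ∃ (S : 𝒞) (s1 s2 : S ⟶ X), N s1 ∧ IsCoeqOf f s1 s2

/-- `f` is saturating: the induced morphism between the `N`-kernels of the
identities is a regular epimorphism. -/
def Saturating (N : MorphismProperty 𝒞) {X Y : 𝒞} (f : X ⟶ Y) : Prop :=
  ∀ {KX KY : 𝒞} (nX : KX ⟶ X) (nY : KY ⟶ Y), IsNKernel N (𝟙 X) nX → IsNKernel N (𝟙 Y) nY →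
    ∀ u : KX ⟶ KY, u ≫ nY = nX ≫ f → IsRegEpi u

/-- `X` is an `N`-trivial object. -/
def NTrivial (N : MorphismProperty 𝒞) (X : 𝒞) : Prop := N (𝟙 X)

/-- The multi-pointed category has enough trivial objects: `N` is a closed ideal and
`N`-trivial objects are closed under subobjects and squares. -/
def EnoughTrivialObjects [HasBinaryProducts 𝒞] (N : MorphismProperty 𝒞) : Prop :=
  (∀ {X Y : 𝒞} (f : X ⟶ Y), N f → ∃ (T : 𝒞) (p : X ⟶ T) (q : T ⟶ Y),
      NTrivial N T ∧ p ≫ q = f) ∧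
  (∀ {S X : 𝒞} (m : S ⟶ X), Mono m → NTrivial N X → NTrivial N S) ∧
  (∀ X : 𝒞, NTrivial N X → NTrivial N (X ⨯ X))

/-- A square of type (1) is a star-regular pushout when `(c g°)* = f° d*`. -/
def IsStarRegularPushout [HasPullbacks 𝒞] (N : MorphismProperty 𝒞) {A B E D : 𝒞}
    (f : A ⟶ B) (g : E ⟶ D) (c : E ⟶ A) (d : D ⟶ B) : Prop :=
  ∀ (ρ τ μ : Rel 𝒞 D A) (ds : Rel 𝒞 D B),
    IsRelComp (homRel c) (Rel.op (homRel g)) ρ → IsLargestStarSub N ρ τ →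
    IsLargestStarSub N (homRel d) ds → IsRelComp (Rel.op (homRel f)) ds μ →
    τ.equiv μ

/-- 2-star-permutability: `Eq(f) Eq(g)* = Eq(g) Eq(f)*` for all regular
epimorphisms `f`, `g` with the same domain. -/
def TwoStarPermutable (𝒞 : Type u) [Category.{v} 𝒞] [HasPullbacks 𝒞]
    (N : MorphismProperty 𝒞) : Prop :=
  ∀ {X Y Z : 𝒞} (f : X ⟶ Y) (g : X ⟶ Z), IsRegEpi f → IsRegEpi g →
    ∀ (sf sg : Rel 𝒞 X X), IsLargestStarSub N (kerPairRel f) sf →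
      IsLargestStarSub N (kerPairRel g) sg →
    ∀ (τ₁ τ₂ : Rel 𝒞 X X), IsRelComp (kerPairRel f) sg τ₁ →
      IsRelComp (kerPairRel g) sf τ₂ → τ₁.equiv τ₂

section Pointed

variable [HasZeroMorphisms 𝒞]

/-- `k` is a kernel of `f`. -/
def IsKernelOf {K X Y : 𝒞} (k : K ⟶ X) (f : X ⟶ Y) : Prop :=
  k ≫ f = 0 ∧ ∀ {Z : 𝒞} (m : Z ⟶ X), m ≫ f = 0 → ∃! u : Z ⟶ K, u ≫ k = m

/-- `f` is a cokernel of `k`. -/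
def IsCokernelOf {X Y K : 𝒞} (f : X ⟶ Y) (k : K ⟶ X) : Prop :=
  k ≫ f = 0 ∧ ∀ {T : 𝒞} (h : X ⟶ T), k ≫ h = 0 → ∃! u : Y ⟶ T, f ≫ u = h

/-- Short exact sequence `K → X ↠ Y`. -/
def IsShortExact {K X Y : 𝒞} (k : K ⟶ X) (f : X ⟶ Y) : Prop :=
  IsKernelOf k f ∧ IsCokernelOf f k

/-- Subtractivity: every reflexive, left punctual relation is right punctual. -/
def IsSubtractive (𝒞 : Type u) [Category.{v} 𝒞] [HasZeroMorphisms 𝒞] : Prop :=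
  ∀ {X : 𝒞} (ρ : Rel 𝒞 X X), ρ.IsReflexive →
    (∃ l : X ⟶ ρ.R, l ≫ ρ.p1 = 𝟙 X ∧ l ≫ ρ.p2 = 0) →
    (∃ r : X ⟶ ρ.R, r ≫ ρ.p1 = 0 ∧ r ≫ ρ.p2 = 𝟙 X)

end Pointed

section Helpers

theorem IsRegEpi.cancel {X Y : 𝒞} {f : X ⟶ Y} (hf : IsRegEpi f) {T : 𝒞}
    {u v : Y ⟶ T} (h : f ≫ u = f ≫ v) : u = v := by
  obtain ⟨Z, a, b, hab, huniv⟩ := hf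
  have h1 : a ≫ f ≫ u = b ≫ f ≫ u := by
    rw [← Category.assoc, hab, Category.assoc]
  obtain ⟨w, -, hw⟩ := huniv (f ≫ u) h1
  exact (hw u rfl).trans (hw v h.symm).symm

theorem isRegEpi_of_isIso {X Y : 𝒞} (f : X ⟶ Y) (hf : IsIso f) : IsRegEpi f :=
  ⟨X, 𝟙 X, 𝟙 X, rfl, fun {T} h _ =>
    ⟨inv f ≫ h, by simp, fun v hv => by rw [← hv]; simp⟩⟩

theorem isRegEpi_iso_comp {X Y Z : 𝒞} {i : X ⟶ Y} {f : Y ⟶ Z} (hi : IsIso i)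
    (hf : IsRegEpi f) : IsRegEpi (i ≫ f) := by
  obtain ⟨W, a, b, hab, huniv⟩ := hf
  refine ⟨W, a ≫ inv i, b ≫ inv i, by simp [hab], fun {T} h hh => ?_⟩
  obtain ⟨w, hw1, hw2⟩ := huniv (inv i ≫ h) (by simpa using hh)
  refine ⟨w, ?_, fun v hv => hw2 v ?_⟩
  · show (i ≫ f) ≫ w = h
    rw [Category.assoc, hw1]; simp
  · show f ≫ v = inv i ≫ h
    rw [← hv]; simp

/-- Descend a comparison morphism along a regular epimorphism into a jointly
monomorphic span. -/
theorem regEpi_desc {W R R₀ X Y : 𝒞} {e : W ⟶ R} (he : IsRegEpi e) (f₀ : W ⟶ R₀)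
    (p1 : R ⟶ X) (p2 : R ⟶ Y) (q1 : R₀ ⟶ X) (q2 : R₀ ⟶ Y)
    (jm : ∀ {T : 𝒞} (a b : T ⟶ R₀), a ≫ q1 = b ≫ q1 → a ≫ q2 = b ≫ q2 → a = b)
    (h1 : e ≫ p1 = f₀ ≫ q1) (h2 : e ≫ p2 = f₀ ≫ q2) :
    ∃ j : R ⟶ R₀, j ≫ q1 = p1 ∧ j ≫ q2 = p2 := by
  obtain ⟨Z, a, b, hab, huniv⟩ := he
  have hf : a ≫ f₀ = b ≫ f₀ := by
    apply jm
    · rw [Category.assoc, ← h1, Category.assoc, ← h1, ← Category.assoc, hab,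
        Category.assoc]
    · rw [Category.assoc, ← h2, Category.assoc, ← h2, ← Category.assoc, hab,
        Category.assoc]
  obtain ⟨j, hj, -⟩ := huniv f₀ hf
  have he' : IsRegEpi e := ⟨Z, a, b, hab, huniv⟩
  refine ⟨j, he'.cancel ?_, he'.cancel ?_⟩
  · rw [← Category.assoc, hj, h1]
  · rw [← Category.assoc, hj, h2]

theorem Rel.le_refl (ρ : Rel 𝒞 X Y) : ρ.le ρ := ⟨𝟙 _, by simp, by simp⟩

theorem Rel.le_trans {ρ σ τ : Rel 𝒞 X Y} (h1 : ρ.le σ) (h2 : σ.le τ) : ρ.le τ := by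
  obtain ⟨j, hj1, hj2⟩ := h1
  obtain ⟨k, hk1, hk2⟩ := h2
  exact ⟨j ≫ k, by rw [Category.assoc, hk1, hj1], by rw [Category.assoc, hk2, hj2]⟩

theorem Rel.equiv_refl (ρ : Rel 𝒞 X Y) : ρ.equiv ρ := ⟨ρ.le_refl, ρ.le_refl⟩

theorem Rel.equiv_symm {ρ σ : Rel 𝒞 X Y} (h : ρ.equiv σ) : σ.equiv ρ := ⟨h.2, h.1⟩

theorem Rel.equiv_trans {ρ σ τ : Rel 𝒞 X Y} (h1 : ρ.equiv σ) (h2 : σ.equiv τ) :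
    ρ.equiv τ :=
  ⟨Rel.le_trans h1.1 h2.1, Rel.le_trans h2.2 h1.2⟩

/-- Largest star subrelations of equivalent relations are equivalent. -/
theorem largest_congr {N : MorphismProperty 𝒞} {ρ ρ' τ τ' : Rel 𝒞 X Y}
    (h : ρ.equiv ρ') (h1 : IsLargestStarSub N ρ τ) (h2 : IsLargestStarSub N ρ' τ') :
    τ.equiv τ' :=
  ⟨h2.2.2 τ (Rel.le_trans h1.1 h.1) h1.2.1, h1.2.2 τ' (Rel.le_trans h2.1 h.2) h2.2.1⟩

theorem relComp_le [HasPullbacks 𝒞] {σ : Rel 𝒞 Y Z} {ρ ρ' : Rel 𝒞 X Y}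
    {τ τ' : Rel 𝒞 X Z} (h : ρ.le ρ')
    (h1 : IsRelComp σ ρ τ) (h2 : IsRelComp σ ρ' τ') : τ.le τ' := by
  obtain ⟨e, he, he1, he2⟩ := h1
  obtain ⟨e', he', he1', he2'⟩ := h2
  obtain ⟨j, hj1, hj2⟩ := h
  have hcomm : (pullback.fst ρ.p2 σ.p1 ≫ j) ≫ ρ'.p2 =
      pullback.snd ρ.p2 σ.p1 ≫ σ.p1 := by
    rw [Category.assoc, hj2, pullback.condition]
  have g1 : e ≫ τ.p1 =
      (pullback.lift (pullback.fst ρ.p2 σ.p1 ≫ j) (pullback.snd ρ.p2 σ.p1) hcomm ≫ e')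
        ≫ τ'.p1 := by
    rw [he1, Category.assoc, he1', ← Category.assoc, pullback.lift_fst,
      Category.assoc, hj1]
  have g2 : e ≫ τ.p2 =
      (pullback.lift (pullback.fst ρ.p2 σ.p1 ≫ j) (pullback.snd ρ.p2 σ.p1) hcomm ≫ e')
        ≫ τ'.p2 := by
    rw [he2, Category.assoc, he2', ← Category.assoc, pullback.lift_snd]
  obtain ⟨l, hl1, hl2⟩ := regEpi_desc he _ τ.p1 τ.p2 τ'.p1 τ'.p2 τ'.jm g1 g2
  exact ⟨l, hl1, hl2⟩

theorem relComp_congr [HasPullbacks 𝒞] {σ : Rel 𝒞 Y Z} {ρ ρ' : Rel 𝒞 X Y}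
    {τ τ' : Rel 𝒞 X Z} (h : ρ.equiv ρ')
    (h1 : IsRelComp σ ρ τ) (h2 : IsRelComp σ ρ' τ') : τ.equiv τ' :=
  ⟨relComp_le h.1 h1 h2, relComp_le h.2 h2 h1⟩

theorem IsNKernel.cancel {N : MorphismProperty 𝒞} (hN : IsIdeal N) {X Y K : 𝒞}
    {f : X ⟶ Y} {n : K ⟶ X} (h : IsNKernel N f n) {T : 𝒞} {a b : T ⟶ K}
    (hab : a ≫ n = b ≫ n) : a = b := by
  have hmem : N ((a ≫ n) ≫ f) := by
    rw [Category.assoc]; exact hN a (n ≫ f) (Or.inr h.1)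
  obtain ⟨w, -, hw⟩ := h.2 (a ≫ n) hmem
  exact (hw a rfl).trans (hw b hab.symm).symm

end Helpers

/-- In a regular multi-pointed category with kernels, given a square
of type (1) and the (regular epi, mono) factorisation `⟨g,c⟩ = m·p`, the square is a
star-regular pushout iff the induced morphism between the `N`-kernels of `a = x·m`
and of `x` is an isomorphism. -/
theorem statement2 [HasFiniteLimits 𝒞]
    (hcoeq : KernelPairsHaveCoequalisers 𝒞) (hstab : RegEpisStable 𝒞)
    (N : MorphismProperty 𝒞) (hN : IsIdeal N) (hker : HasNKernels N)
    {A B E D : 𝒞} (f : A ⟶ B) (s : B ⟶ A) (g : E ⟶ D) (t : D ⟶ E)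
    (c : E ⟶ A) (d : D ⟶ B) (hsq : IsSquare1 f s g t c d)
    {M : 𝒞} (p : E ⟶ M) (m : M ⟶ pullback d f)
    (hp : IsRegEpi p) (hm : Mono m)
    (hmp : p ≫ m = pullback.lift g c hsq.comm1.symm)
    {Na : 𝒞} (na : Na ⟶ M) (hna : IsNKernel N (m ≫ pullback.fst d f) na)
    {Nx : 𝒞} (nx : Nx ⟶ pullback d f) (hnx : IsNKernel N (pullback.fst d f) nx)
    (u : Na ⟶ Nx) (hu : u ≫ nx = na ≫ m) :
    IsStarRegularPushout N f g c d ↔ IsIso u := by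
  haveI := hm
  obtain ⟨K, n, hn⟩ := hker (𝟙 D)
  have hNn : N n := by simpa using hn.1
  have hpm1 : p ≫ m ≫ pullback.fst d f = g := by
    rw [← Category.assoc, hmp, pullback.lift_fst]
  have hpm2 : p ≫ m ≫ pullback.snd d f = c := by
    rw [← Category.assoc, hmp, pullback.lift_snd]
  -- joint monomorphicity of the concrete spans
  have jmM : ∀ {T : 𝒞} (a b : T ⟶ M),
      a ≫ (m ≫ pullback.fst d f) = b ≫ (m ≫ pullback.fst d f) →
      a ≫ (m ≫ pullback.snd d f) = b ≫ (m ≫ pullback.snd d f) → a = b := by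
    intro T a b h1 h2
    rw [← cancel_mono m]
    apply pullback.hom_ext
    · simpa using h1
    · simpa using h2
  have jmNa : ∀ {T : 𝒞} (a b : T ⟶ Na),
      a ≫ (na ≫ (m ≫ pullback.fst d f)) = b ≫ (na ≫ (m ≫ pullback.fst d f)) →
      a ≫ (na ≫ (m ≫ pullback.snd d f)) = b ≫ (na ≫ (m ≫ pullback.snd d f)) →
      a = b := by
    intro T a b h1 h2
    refine hna.cancel hN (jmM (a ≫ na) (b ≫ na) ?_ ?_)
    · simpa using h1
    · simpa using h2
  have jmNx : ∀ {T : 𝒞} (a b : T ⟶ Nx),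
      a ≫ (nx ≫ pullback.fst d f) = b ≫ (nx ≫ pullback.fst d f) →
      a ≫ (nx ≫ pullback.snd d f) = b ≫ (nx ≫ pullback.snd d f) → a = b := by
    intro T a b h1 h2
    refine hnx.cancel hN (pullback.hom_ext ?_ ?_)
    · simpa using h1
    · simpa using h2
  have jmK : ∀ {T : 𝒞} (a b : T ⟶ K),
      a ≫ n = b ≫ n → a ≫ (n ≫ d) = b ≫ (n ≫ d) → a = b :=
    fun a b h1 _ => hn.cancel hN h1
  -- the concrete relations
  let ρ₀ : Rel 𝒞 D A := ⟨M, m ≫ pullback.fst d f, m ≫ pullback.snd d f, jmM⟩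
  let τ₀ : Rel 𝒞 D A :=
    ⟨Na, na ≫ (m ≫ pullback.fst d f), na ≫ (m ≫ pullback.snd d f), jmNa⟩
  let ds₀ : Rel 𝒞 D B := ⟨K, n, n ≫ d, jmK⟩
  let μ₀ : Rel 𝒞 D A := ⟨Nx, nx ≫ pullback.fst d f, nx ≫ pullback.snd d f, jmNx⟩
  -- P1 : ρ₀ = c g°
  have hfs : pullback.fst (𝟙 E) (𝟙 E) = pullback.snd (𝟙 E) (𝟙 E) := by
    simpa using pullback.condition (f := 𝟙 E) (g := 𝟙 E)
  have hfstiso : IsIso (pullback.fst (𝟙 E) (𝟙 E)) := by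
    refine ⟨pullback.lift (𝟙 E) (𝟙 E) rfl, ?_, pullback.lift_fst _ _ _⟩
    apply pullback.hom_ext
    · rw [Category.assoc, pullback.lift_fst, Category.comp_id, Category.id_comp]
    · rw [Category.assoc, pullback.lift_snd, Category.comp_id, Category.id_comp, hfs]
  have P1 : IsRelComp (homRel c) (Rel.op (homRel g)) ρ₀ := by
    refine ⟨pullback.fst (𝟙 E) (𝟙 E) ≫ p, isRegEpi_iso_comp hfstiso hp, ?_, ?_⟩
    · show (pullback.fst (𝟙 E) (𝟙 E) ≫ p) ≫ (m ≫ pullback.fst d f) =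
        pullback.fst (𝟙 E) (𝟙 E) ≫ g
      rw [Category.assoc, hpm1]
    · show (pullback.fst (𝟙 E) (𝟙 E) ≫ p) ≫ (m ≫ pullback.snd d f) =
        pullback.snd (𝟙 E) (𝟙 E) ≫ c
      rw [Category.assoc, hpm2, hfs]
  -- P2 : τ₀ = ρ₀*
  have P2 : IsLargestStarSub N ρ₀ τ₀ := by
    refine ⟨⟨na, rfl, rfl⟩, hna.1, ?_⟩
    intro σ hle hNs
    obtain ⟨j, hj1, hj2⟩ := hle
    have hj1' : j ≫ (m ≫ pullback.fst d f) = σ.p1 := hj1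
    have hj2' : j ≫ (m ≫ pullback.snd d f) = σ.p2 := hj2
    obtain ⟨w, hw, -⟩ := hna.2 j (by rw [hj1']; exact hNs)
    refine ⟨w, ?_, ?_⟩
    · show w ≫ (na ≫ (m ≫ pullback.fst d f)) = σ.p1
      rw [← Category.assoc, hw, hj1']
    · show w ≫ (na ≫ (m ≫ pullback.snd d f)) = σ.p2
      rw [← Category.assoc, hw, hj2']
  -- P3 : ds₀ = d*
  have P3 : IsLargestStarSub N (homRel d) ds₀ := by
    refine ⟨⟨n, by show n ≫ 𝟙 D = n; simp, rfl⟩, hNn, ?_⟩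
    intro σ hle hNs
    obtain ⟨j0, hj1, hj2⟩ := hle
    have hj1' : j0 = σ.p1 := by
      rw [← hj1]; exact (Category.comp_id j0).symm
    obtain ⟨w, hw, -⟩ := hn.2 j0 (by rw [← hj1] at hNs; exact hNs)
    refine ⟨w, ?_, ?_⟩
    · show w ≫ n = σ.p1
      rw [hw, hj1']
    · show w ≫ (n ≫ d) = σ.p2
      rw [← Category.assoc, hw]
      exact hj2
  -- P4 : μ₀ = f° ds₀
  have hz : (pullback.fst (n ≫ d) f ≫ n) ≫ d = pullback.snd (n ≫ d) f ≫ f := by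
    rw [Category.assoc]; exact pullback.condition
  obtain ⟨e0, he0, -⟩ := hnx.2
    (pullback.lift (pullback.fst (n ≫ d) f ≫ n) (pullback.snd (n ≫ d) f) hz)
    (by rw [pullback.lift_fst]; exact hN _ n (Or.inr hNn))
  obtain ⟨w0, hw0, -⟩ := hn.2 (nx ≫ pullback.fst d f) (by simpa using hnx.1)
  have hz' : w0 ≫ n ≫ d = (nx ≫ pullback.snd d f) ≫ f := by
    rw [← Category.assoc, hw0, Category.assoc, pullback.condition, ← Category.assoc]
  have he0iso : IsIso e0 := by
    refine ⟨pullback.lift w0 (nx ≫ pullback.snd d f) hz', ?_, ?_⟩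
    · apply pullback.hom_ext
      · rw [Category.assoc, pullback.lift_fst, Category.id_comp]
        refine hn.cancel hN ?_
        rw [Category.assoc, hw0, ← Category.assoc, he0, pullback.lift_fst]
      · rw [Category.assoc, pullback.lift_snd, Category.id_comp, ← Category.assoc,
          he0, pullback.lift_snd]
    · refine hnx.cancel hN ?_
      rw [Category.assoc, he0, Category.id_comp]
      apply pullback.hom_ext
      · rw [Category.assoc, pullback.lift_fst, ← Category.assoc, pullback.lift_fst]
        exact hw0
      · rw [Category.assoc, pullback.lift_snd, pullback.lift_snd]
  have P4 : IsRelComp (Rel.op (homRel f)) ds₀ μ₀ := by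
    refine ⟨e0, isRegEpi_of_isIso e0 he0iso, ?_, ?_⟩
    · show e0 ≫ (nx ≫ pullback.fst d f) = pullback.fst (n ≫ d) f ≫ n
      rw [← Category.assoc, he0, pullback.lift_fst]
    · show e0 ≫ (nx ≫ pullback.snd d f) = pullback.snd (n ≫ d) f ≫ 𝟙 A
      rw [← Category.assoc, he0, pullback.lift_snd, Category.comp_id]
  -- key equivalence: τ₀ ≃ μ₀ ↔ u iso
  have keyfwd : τ₀.equiv μ₀ → IsIso u := by
    intro hequiv
    obtain ⟨k, hk1, hk2⟩ := hequiv.2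
    have hk1' : k ≫ (na ≫ (m ≫ pullback.fst d f)) = nx ≫ pullback.fst d f := hk1
    have hk2' : k ≫ (na ≫ (m ≫ pullback.snd d f)) = nx ≫ pullback.snd d f := hk2
    have hknm : (k ≫ na) ≫ m = nx := by
      apply pullback.hom_ext
      · simpa using hk1'
      · simpa using hk2'
    refine ⟨k, ?_, ?_⟩
    · refine hna.cancel hN ?_
      rw [← cancel_mono m]
      simp only [Category.assoc, Category.id_comp]
      rw [← Category.assoc k na m, hknm]
      exact hu
    · refine hnx.cancel hN ?_
      rw [Category.id_comp, Category.assoc, hu, ← Category.assoc, hknm]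
  have keybwd : IsIso u → τ₀.equiv μ₀ := by
    intro hiso
    constructor
    · refine ⟨u, ?_, ?_⟩
      · show u ≫ (nx ≫ pullback.fst d f) = na ≫ (m ≫ pullback.fst d f)
        rw [← Category.assoc, hu, Category.assoc]
      · show u ≫ (nx ≫ pullback.snd d f) = na ≫ (m ≫ pullback.snd d f)
        rw [← Category.assoc, hu, Category.assoc]
    · refine ⟨inv u, ?_, ?_⟩
      · show inv u ≫ (na ≫ (m ≫ pullback.fst d f)) = nx ≫ pullback.fst d f
        rw [← Category.assoc, ← Category.assoc, Category.assoc (inv u) na m, ← hu,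
          ← Category.assoc, IsIso.inv_hom_id, Category.id_comp]
      · show inv u ≫ (na ≫ (m ≫ pullback.snd d f)) = nx ≫ pullback.snd d f
        rw [← Category.assoc, ← Category.assoc, Category.assoc (inv u) na m, ← hu,
          ← Category.assoc, IsIso.inv_hom_id, Category.id_comp]
  constructor
  · intro h
    exact keyfwd (h ρ₀ τ₀ μ₀ ds₀ P1 P2 P3 P4)
  · intro hiso ρ τ μ ds hρ hτ hds hμ
    have hρeq : ρ.equiv ρ₀ := relComp_congr (Rel.equiv_refl _) hρ P1
    have hτeq : τ.equiv τ₀ := largest_congr hρeq hτ P2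
    have hdseq : ds.equiv ds₀ := largest_congr (Rel.equiv_refl _) hds P3
    have hμeq : μ.equiv μ₀ := relComp_congr hdseq hμ P4
    exact Rel.equiv_trans (Rel.equiv_trans hτeq (keybwd hiso)) (Rel.equiv_symm hμeq)

end Paper
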